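/- Let n ≥ 0 be an integer, set ε = (−1)^{n(n−1)/2}, and let L be an ℓ×ℓ lower triangular integer matrix all of whose diagonal entries equal −ε. Set S = −L − (−1)^n L^t. On M = ℤ^ℓ with standard basis e_1, …, e_ℓ, define for each i the ℤ-linear operator s_i by s_i(e_j) = e_j − ε S_{ji} e_i, let c = s_1 ∘ ⋯ ∘ s_ℓ, and let C be the matrix of c with respect to the basis (C_{ij} the coefficient of e_i in c(e_j)). Then L^t · C = (−1)^{n+1} L; equivalently, C = (−1)^{n+1}(L^t)^{-1} L. -/

import Mathlib

open Matrix

/-- Let `ε = (-1)^(n(n-1)/2)` and let `L` be a lower triangular integer matrix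
with all diagonal entries equal to `-ε`. Set `S = -L - (-1)^n Lᵀ`. For the operators
`s i` on `ℤ^ℓ` defined by `s i (e j) = e j - ε S j i • e i`, the matrix `C` of
`c = s 1 ∘ ⋯ ∘ s ℓ` with respect to the standard basis satisfies
`Lᵀ * C = (-1)^(n+1) • L`, i.e. `C = (-1)^(n+1) (Lᵀ)⁻¹ L`. -/
theorem monodromy_matrix_from_seifert_matrix (n ℓ : ℕ)
    (ε : ℤ) (hε : ε = (-1 : ℤ) ^ (n * (n - 1) / 2))
    (L : Matrix (Fin ℓ) (Fin ℓ) ℤ)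
    (hlow : ∀ i j : Fin ℓ, i < j → L i j = 0)
    (hdiag : ∀ i : Fin ℓ, L i i = -ε)
    (S : Matrix (Fin ℓ) (Fin ℓ) ℤ)
    (hS : S = -L - ((-1 : ℤ) ^ n) • Lᵀ)
    (s : Fin ℓ → Module.End ℤ (Fin ℓ → ℤ))
    (hs : ∀ i j : Fin ℓ, s i (Pi.single j 1) = Pi.single j 1 - (ε * S j i) • Pi.single i 1)
    (c : Module.End ℤ (Fin ℓ → ℤ)) (hc : c = ((List.finRange ℓ).map s).prod)
    (C : Matrix (Fin ℓ) (Fin ℓ) ℤ)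
    (hC : C = LinearMap.toMatrix (Pi.basisFun ℤ (Fin ℓ)) (Pi.basisFun ℤ (Fin ℓ)) c) :
    Lᵀ * C = ((-1 : ℤ) ^ (n + 1)) • L := by
  have hε2 : ε * ε = 1 := by
    rw [hε, ← pow_add, ← two_mul, pow_mul]; norm_num
  -- pointwise description of s i
  have hs' : ∀ (i : Fin ℓ) (x : Fin ℓ → ℤ) (p : Fin ℓ),
      s i x p = x p - (if p = i then ∑ j, ε * S j i * x j else 0) := by
    intro i x p
    have hx : x = ∑ j, x j • Pi.single j (1 : ℤ) := by
      funext q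
      simp [Finset.sum_apply, Pi.single_apply]
    have hsx : s i x = ∑ j, x j • (Pi.single j 1 - (ε * S j i) • Pi.single i 1) := by
      conv_lhs => rw [hx]
      rw [map_sum]
      exact Finset.sum_congr rfl fun j _ => by rw [LinearMap.map_smul, hs]
    rw [hsx]
    simp only [Finset.sum_apply, Pi.smul_apply, Pi.sub_apply, Pi.single_apply,
      smul_eq_mul, mul_sub, Finset.sum_sub_distrib]
    by_cases hpi : p = i <;>
      simp [hpi, Finset.mul_sum, mul_ite, mul_comm, mul_left_comm]
  have hSent : ∀ i j : Fin ℓ, ε * S j i = -ε * L j i + (-1 : ℤ) ^ n * (-ε * L i j) := by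
    intro i j
    rw [hS]
    simp only [Matrix.sub_apply, Matrix.neg_apply, Matrix.smul_apply,
      Matrix.transpose_apply, smul_eq_mul]
    ring
  have key : ∀ l : List (Fin ℓ), l.Pairwise (· < ·) → ∀ x : Fin ℓ → ℤ,
      (∀ p, p ∉ l → ((l.map s).prod x) p = x p) ∧
      (∀ k ∈ l, ∑ p, (-ε * L p k) * ((l.map s).prod x) p
        = -((-1 : ℤ) ^ n) * ∑ p, (-ε * L k p) * x p) := by
    intro l
    induction l with
    | nil => intro _ x; simp
    | cons k t ih =>
      intro hl x
      rcases List.pairwise_cons.mp hl with ⟨hk, ht⟩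
      obtain ⟨ih1, ih2⟩ := ih ht x
      set y' : Fin ℓ → ℤ := ((t.map s).prod) x with hy'
      have hprod : (((k :: t).map s).prod) x = s k y' := by
        simp [List.prod_cons, Module.End.mul_apply, hy']
      constructor
      · intro p hp
        have hpk : p ≠ k := fun h => hp (h ▸ (List.mem_cons_self : k ∈ k :: t))
        have hpt : p ∉ t := fun h => hp (List.mem_cons_of_mem _ h)
        rw [hprod, hs' k y' p, if_neg hpk, sub_zero, ih1 p hpt]
      · intro q hq
        rw [hprod]
        have expand : ∀ p, (-ε * L p q) * (s k y') p
            = (-ε * L p q) * y' p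
              - (if p = k then (-ε * L p q) * ∑ j, ε * S j k * y' j else 0) := by
          intro p
          rw [hs' k y' p]
          by_cases hpk : p = k <;> simp [hpk] <;> ring
        simp only [expand, Finset.sum_sub_distrib, Finset.sum_ite_eq' , Finset.mem_univ,
          if_true]
        rcases List.mem_cons.mp hq with hqk | hqt
        · -- q = k
          subst hqk
          have hLqq : -ε * L q q = 1 := by rw [hdiag]; rw [mul_neg, neg_mul, neg_neg, hε2]
          rw [hLqq, one_mul]
          have hsplit : ∑ j, ε * S j q * y' j
              = (∑ j, (-ε * L j q) * y' j) + (-1 : ℤ) ^ n * ∑ j, (-ε * L q j) * y' j := by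
            rw [Finset.mul_sum, ← Finset.sum_add_distrib]
            refine Finset.sum_congr rfl fun j _ => ?_
            rw [hSent q j]; ring
          rw [hsplit]
          have hPx : ∑ j, (-ε * L q j) * y' j = ∑ j, (-ε * L q j) * x j := by
            refine Finset.sum_congr rfl fun j _ => ?_
            by_cases hjt : j ∈ t
            · have : q < j := hk j hjt
              rw [hlow q j this]; ring
            · rw [ih1 j hjt]
          rw [hPx]; ring
        · -- q ∈ t
          have hkq : k < q := hk q hqt
          rw [hlow k q hkq]
          rw [ih2 q hqt]; ring
  ext i j
  obtain ⟨-, key2⟩ := key (List.finRange ℓ) (List.pairwise_lt_finRange ℓ) (Pi.single j 1)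
  have hk := key2 i (List.mem_finRange i)
  rw [← hc] at hk
  have hCent : ∀ p, C p j = c (Pi.single j 1) p := by
    intro p
    rw [hC, LinearMap.toMatrix_apply]
    simp
  have hrhs : ∑ p, (-ε * L i p) * ((Pi.single j 1 : Fin ℓ → ℤ)) p = -ε * L i j := by
    simp [Pi.single_apply, mul_ite]
  rw [hrhs] at hk
  have hLHS : (Lᵀ * C) i j = -ε * ∑ p, (-ε * L p i) * c (Pi.single j 1) p := by
    rw [Matrix.mul_apply, Finset.mul_sum]
    refine Finset.sum_congr rfl fun p _ => ?_
    rw [Matrix.transpose_apply, hCent p]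
    linear_combination (-(L p i * c (Pi.single j 1) p)) * hε2
  rw [hLHS, hk, Matrix.smul_apply, smul_eq_mul, pow_succ]
  linear_combination (-(-1 : ℤ) ^ n * L i j) * hε2
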